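/- Let K(t) := ∫_t^T ‖σ(s)ᵀv*(s)‖² ds with inf_s ‖σ(s)ᵀv*(s)‖ > 0, and define Δ(t) := K(t)^{-1/2} · Φ'(−√K(t)) / Φ(−√K(t)) for t ∈ [0,T). Then Δ(t) > 1 for all t ∈ [0,T), lim_{t↑T} Δ(t) = +∞, ∫_0^T Δ(s) ds < ∞, and ∫_0^T Δ(s)² ds = ∞. -/

import Mathlib

open MeasureTheory intervalIntegral

/-- The standard normal cumulative distribution function. -/
noncomputable def stdNormalCDF (x : ℝ) : ℝ :=
  (Real.sqrt (2 * Real.pi))⁻¹ * ∫ u in Set.Iic x, Real.exp (-u ^ 2 / 2)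

/-- The standard normal density. -/
noncomputable def stdNormalPDF (x : ℝ) : ℝ :=
  (Real.sqrt (2 * Real.pi))⁻¹ * Real.exp (-x ^ 2 / 2)

lemma gauss_eq (u : ℝ) : Real.exp (-u ^ 2 / 2) = Real.exp (-(1/2 : ℝ) * u ^ 2) := by
  ring_nf

lemma gauss_integrable : Integrable (fun u : ℝ => Real.exp (-u ^ 2 / 2)) := by
  simpa [gauss_eq] using integrable_exp_neg_mul_sq (by norm_num : (0:ℝ) < 1/2)

lemma gauss_mul_integrable : Integrable (fun u : ℝ => u * Real.exp (-u ^ 2 / 2)) := by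
  simpa [gauss_eq] using integrable_mul_exp_neg_mul_sq (by norm_num : (0:ℝ) < 1/2)

lemma gauss_antideriv (d : ℝ) :
    ∫ u in Set.Iic d, (-u) * Real.exp (-u ^ 2 / 2) = Real.exp (-d ^ 2 / 2) := by
  have h := integral_Iic_of_hasDerivAt_of_tendsto (f := fun u : ℝ => Real.exp (-u ^ 2 / 2))
    (f' := fun u : ℝ => (-u) * Real.exp (-u ^ 2 / 2)) (a := d) (m := 0)
    (Continuous.continuousWithinAt (by continuity))
    (fun x _ => by
      have h1 : HasDerivAt (fun u : ℝ => -u ^ 2 / 2) (-x) x := by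
        have := ((hasDerivAt_pow 2 x).neg).div_const 2
        simpa using this.congr_deriv (by ring)
      simpa [mul_comm] using h1.exp)
    (by
      have := gauss_mul_integrable.neg.integrableOn (s := Set.Iic d)
      simpa [neg_mul] using this)
    ?_
  · simpa using h
  · have hsq : Filter.Tendsto (fun u : ℝ => u ^ 2) Filter.atBot Filter.atTop := by
      have := (Filter.tendsto_neg_atBot_atTop (G := ℝ)).atTop_mul_atTop₀
        (Filter.tendsto_neg_atBot_atTop (G := ℝ))
      exact this.congr (fun x => by ring)
    have h1 : Filter.Tendsto (fun u : ℝ => Real.exp (-u ^ 2 / 2)) Filter.atBot (nhds 0) := by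
      have := Real.tendsto_exp_neg_atTop_nhds_zero.comp (hsq.atTop_div_const (by norm_num : (0:ℝ) < 2))
      exact this.congr (fun x => by rw [Function.comp]; ring_nf)
    exact h1

lemma sqrt_two_pi_pos : 0 < Real.sqrt (2 * Real.pi) :=
  Real.sqrt_pos.mpr (by positivity)

lemma cdf_Iic_eq (x : ℝ) : (∫ u in Set.Iic x, Real.exp (-u ^ 2 / 2))
    = (∫ u in Set.Iic 0, Real.exp (-u ^ 2 / 2)) + ∫ u in (0:ℝ)..x, Real.exp (-u ^ 2 / 2) := by
  rw [← integral_Iic_sub_Iic gauss_integrable.integrableOn gauss_integrable.integrableOn]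
  ring

lemma cdf_continuous : Continuous stdNormalCDF := by
  unfold stdNormalCDF
  refine continuous_const.mul ?_
  have : Continuous fun x : ℝ => ∫ u in (0:ℝ)..x, Real.exp (-u ^ 2 / 2) :=
    intervalIntegral.continuous_primitive (fun a b => gauss_integrable.intervalIntegrable) 0
  exact (funext cdf_Iic_eq : _) ▸ (continuous_const.add this)

lemma cdf_pos (x : ℝ) : 0 < stdNormalCDF x := by
  unfold stdNormalCDF
  refine mul_pos (inv_pos.mpr sqrt_two_pi_pos) ?_
  rw [setIntegral_pos_iff_support_of_nonneg_ae]
  · have : Function.support (fun u : ℝ => Real.exp (-u ^ 2 / 2)) = Set.univ := by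
      ext u; simp [Real.exp_ne_zero]
    rw [this, Set.univ_inter, Real.volume_Iic]
    simp
  · exact Filter.Eventually.of_forall (fun u => (Real.exp_pos _).le)
  · exact gauss_integrable.integrableOn

lemma cdf_le_one (x : ℝ) : stdNormalCDF x ≤ 1 := by
  unfold stdNormalCDF
  have h1 : (∫ u in Set.Iic x, Real.exp (-u ^ 2 / 2)) ≤ ∫ u : ℝ, Real.exp (-u ^ 2 / 2) :=
    setIntegral_le_integral gauss_integrable (Filter.Eventually.of_forall fun u => (Real.exp_pos _).le)
  have h2 : (∫ u : ℝ, Real.exp (-u ^ 2 / 2)) = Real.sqrt (2 * Real.pi) := by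
    simp only [gauss_eq]
    rw [integral_gaussian]
    rw [show Real.pi / (1/2) = 2 * Real.pi by ring]
  calc (Real.sqrt (2 * Real.pi))⁻¹ * ∫ u in Set.Iic x, Real.exp (-u ^ 2 / 2)
      ≤ (Real.sqrt (2 * Real.pi))⁻¹ * Real.sqrt (2 * Real.pi) := by
        exact mul_le_mul_of_nonneg_left (h2 ▸ h1) (inv_pos.mpr sqrt_two_pi_pos).le
    _ = 1 := inv_mul_cancel₀ sqrt_two_pi_pos.ne'

lemma cdf_mono : Monotone stdNormalCDF := by
  intro x y hxy
  unfold stdNormalCDF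
  refine mul_le_mul_of_nonneg_left ?_ (inv_pos.mpr sqrt_two_pi_pos).le
  exact setIntegral_mono_set gauss_integrable.integrableOn
    (Filter.Eventually.of_forall fun u => (Real.exp_pos _).le)
    (Filter.Eventually.of_forall (Set.Iic_subset_Iic.mpr hxy) : _)

lemma pdf_pos (x : ℝ) : 0 < stdNormalPDF x :=
  mul_pos (inv_pos.mpr sqrt_two_pi_pos) (Real.exp_pos _)

lemma pdf_le (x : ℝ) : stdNormalPDF x ≤ (Real.sqrt (2 * Real.pi))⁻¹ := by
  unfold stdNormalPDF
  nth_rewrite 2 [← mul_one ((Real.sqrt (2 * Real.pi))⁻¹)]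
  exact mul_le_mul_of_nonneg_left (Real.exp_le_one_iff.mpr (by nlinarith [sq_nonneg x])) (inv_pos.mpr sqrt_two_pi_pos).le

lemma mills {d : ℝ} : (-d) * stdNormalCDF d < stdNormalPDF d := by
  have hint : Integrable (fun u : ℝ => (d - u) * Real.exp (-u ^ 2 / 2)) := by
    have := (gauss_integrable.const_mul d).sub gauss_mul_integrable
    exact this.congr (Filter.Eventually.of_forall fun u => by simp; ring)
  have hJpos : 0 < ∫ u in Set.Iic d, (d - u) * Real.exp (-u ^ 2 / 2) := by
    have h1 : (∫ u in Set.Iic (d - 1), Real.exp (-u ^ 2 / 2))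
        ≤ ∫ u in Set.Iic (d - 1), (d - u) * Real.exp (-u ^ 2 / 2) := by
      refine setIntegral_mono_on gauss_integrable.integrableOn hint.integrableOn
        measurableSet_Iic (fun u hu => ?_)
      have : (1:ℝ) ≤ d - u := by simp at hu; linarith
      nth_rewrite 1 [← one_mul (Real.exp (-u ^ 2 / 2))]
      exact mul_le_mul_of_nonneg_right this (Real.exp_pos _).le
    have h0 : 0 < ∫ u in Set.Iic (d - 1), Real.exp (-u ^ 2 / 2) := by
      rw [setIntegral_pos_iff_support_of_nonneg_ae]
      · have : Function.support (fun u : ℝ => Real.exp (-u ^ 2 / 2)) = Set.univ := by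
          ext u; simp [Real.exp_ne_zero]
        rw [this, Set.univ_inter, Real.volume_Iic]; simp
      · exact Filter.Eventually.of_forall (fun u => (Real.exp_pos _).le)
      · exact gauss_integrable.integrableOn
    have h2 : (∫ u in Set.Iic (d - 1), (d - u) * Real.exp (-u ^ 2 / 2))
        ≤ ∫ u in Set.Iic d, (d - u) * Real.exp (-u ^ 2 / 2) := by
      refine setIntegral_mono_set hint.integrableOn ?_ ?_
      · refine (ae_restrict_iff' measurableSet_Iic).mpr (Filter.Eventually.of_forall fun u hu => ?_)
        have hud : u ≤ d := hu
        simp only [Pi.zero_apply]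
        exact mul_nonneg (by linarith) (Real.exp_pos _).le
      · exact HasSubset.Subset.eventuallyLE (Set.Iic_subset_Iic.mpr (by linarith))
    linarith
  have hsplit : (∫ u in Set.Iic d, (d - u) * Real.exp (-u ^ 2 / 2))
      = d * (∫ u in Set.Iic d, Real.exp (-u ^ 2 / 2)) + Real.exp (-d ^ 2 / 2) := by
    rw [← gauss_antideriv d, ← MeasureTheory.integral_const_mul, ← integral_add
      (gauss_integrable.const_mul d).integrableOn (gauss_mul_integrable.neg.congr
        (Filter.Eventually.of_forall fun u => by simp [neg_mul])).integrableOn]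
    congr 1; ext u; ring
  unfold stdNormalCDF stdNormalPDF
  have := sqrt_two_pi_pos
  rw [hsplit] at hJpos
  nlinarith [inv_pos.mpr sqrt_two_pi_pos]

lemma pdf_continuous : Continuous stdNormalPDF := by
  unfold stdNormalPDF; continuity

lemma pdf_ge {x b : ℝ} (h : x ^ 2 ≤ b) :
    (Real.sqrt (2 * Real.pi))⁻¹ * Real.exp (-b / 2) ≤ stdNormalPDF x := by
  unfold stdNormalPDF
  exact mul_le_mul_of_nonneg_left (Real.exp_le_exp.mpr (by linarith)) (by positivity)

/-- Properties of the naive strategy's leverage multiple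
`Δ(t) = K(t)^{-1/2}·Φ'(−√K(t))/Φ(−√K(t))` with `K(t) = ∫_t^T ‖σ(s)ᵀv*(s)‖²ds`, where
`g(s) = ‖σ(s)ᵀv*(s)‖` is bounded below away from `0` and bounded above: `Δ(t) > 1` on
`[0,T)`, `Δ(t) → ∞` as `t ↑ T`, `∫_0^T Δ < ∞` and `∫_0^T Δ² = ∞`. -/
theorem stmt_17 (T : ℝ) (hT : 0 < T) (g : ℝ → ℝ) (hgmeas : Measurable g)
    (c C : ℝ) (hc : 0 < c)
    (hg : ∀ s ∈ Set.Ico (0 : ℝ) T, c ≤ g s ∧ g s ≤ C) :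
    let K := fun t : ℝ => ∫ s in t..T, (g s) ^ 2;
    let Δ := fun t : ℝ => (Real.sqrt (K t))⁻¹ *
      (stdNormalPDF (-Real.sqrt (K t)) / stdNormalCDF (-Real.sqrt (K t)));
    (∀ t ∈ Set.Ico (0 : ℝ) T, 1 < Δ t) ∧
    Filter.Tendsto Δ (nhdsWithin T (Set.Iio T)) Filter.atTop ∧
    IntervalIntegrable Δ volume 0 T ∧
    ¬ IntervalIntegrable (fun s => (Δ s) ^ 2) volume 0 T := by
  intro K Δ
  have h0T : (0:ℝ) ∈ Set.Ico (0:ℝ) T := ⟨le_refl 0, hT⟩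
  have hcC : c ≤ C := le_trans (hg 0 h0T).1 (hg 0 h0T).2
  have hC : 0 < C := lt_of_lt_of_le hc hcC
  -- modified g
  set g' : ℝ → ℝ := fun s => if 0 ≤ s ∧ s < T then g s else c with hg'def
  have hg'b : ∀ s, c ≤ g' s ∧ g' s ≤ C := by
    intro s
    by_cases h : 0 ≤ s ∧ s < T
    · simpa [hg'def, h] using hg s h
    · simp [hg'def, h, hcC]
  have hg'meas : Measurable g' := by
    apply Measurable.ite _ hgmeas measurable_const
    exact (measurableSet_Ici.inter measurableSet_Iio : MeasurableSet {s : ℝ | 0 ≤ s ∧ s < T})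
  have hg'sq_int : ∀ a b : ℝ, IntervalIntegrable (fun s => (g' s) ^ 2) volume a b := by
    intro a b
    rw [intervalIntegrable_iff]
    refine Integrable.mono' (g := fun _ => C ^ 2) (integrableOn_const measure_Ioc_lt_top.ne) ((hg'meas.pow_const 2).aestronglyMeasurable) ?_
    refine Filter.Eventually.of_forall fun s => ?_
    have h1 := (hg'b s).1; have h2 := (hg'b s).2
    rw [Real.norm_eq_abs, abs_of_nonneg (by nlinarith)]
    show g' s ^ 2 ≤ C ^ 2
    nlinarith
  set K' : ℝ → ℝ := fun t => ∫ s in t..T, (g' s) ^ 2 with hK'def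
  have hKeq : ∀ t ∈ Set.Icc (0:ℝ) T, K t = K' t := by
    intro t ht
    refine intervalIntegral.integral_congr_ae ?_
    have hs : ∀ᵐ x : ℝ, x ≠ T := by
      refine ae_iff.mpr ?_
      simp only [ne_eq, not_not, Set.setOf_eq_eq_singleton]
      exact Real.volume_singleton
    filter_upwards [hs] with x hx hmem
    rw [Set.uIoc_of_le ht.2] at hmem
    have hx0 : 0 ≤ x := le_trans ht.1 hmem.1.le
    have hxT : x < T := lt_of_le_of_ne hmem.2 hx
    simp [hg'def, hx0, hxT]
  have hK'cont : Continuous K' := by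
    have : ∀ t, K' t = (∫ s in (0:ℝ)..T, (g' s) ^ 2) - ∫ s in (0:ℝ)..t, (g' s) ^ 2 := by
      intro t
      rw [integral_interval_sub_left (hg'sq_int 0 T) (hg'sq_int 0 t)]
    rw [funext this]
    exact continuous_const.sub (intervalIntegral.continuous_primitive hg'sq_int 0)
  have hK'lb : ∀ t, t ≤ T → c ^ 2 * (T - t) ≤ K' t := by
    intro t ht
    calc c ^ 2 * (T - t) = ∫ _ in t..T, c ^ 2 := by rw [intervalIntegral.integral_const]; simp [mul_comm]
      _ ≤ K' t := by
          refine intervalIntegral.integral_mono_on ht intervalIntegrable_const (hg'sq_int t T) ?_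
          intro x _
          have := (hg'b x).1
          nlinarith
  have hK'ub : ∀ t, t ≤ T → K' t ≤ C ^ 2 * (T - t) := by
    intro t ht
    calc K' t ≤ ∫ _ in t..T, C ^ 2 := by
          refine intervalIntegral.integral_mono_on ht (hg'sq_int t T) intervalIntegrable_const ?_
          intro x _
          have h1 := (hg'b x).1; have h2 := (hg'b x).2
          nlinarith
      _ = C ^ 2 * (T - t) := by rw [intervalIntegral.integral_const]; simp [mul_comm]
  set Δ' : ℝ → ℝ := fun t => (Real.sqrt (K' t))⁻¹ *
      (stdNormalPDF (-Real.sqrt (K' t)) / stdNormalCDF (-Real.sqrt (K' t))) with hΔ'def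
  have hΔeq : ∀ t ∈ Set.Icc (0:ℝ) T, Δ t = Δ' t := by
    intro t ht
    show (Real.sqrt (K t))⁻¹ *
      (stdNormalPDF (-Real.sqrt (K t)) / stdNormalCDF (-Real.sqrt (K t))) = _
    rw [hKeq t ht]
  -- part 1
  have part1 : ∀ t ∈ Set.Ico (0:ℝ) T, 1 < Δ t := by
    intro t ht
    rw [hΔeq t ⟨ht.1, ht.2.le⟩]
    have hKpos : 0 < K' t := lt_of_lt_of_le (mul_pos (pow_pos hc 2) (sub_pos.mpr ht.2)) (hK'lb t ht.2.le)
    set r := Real.sqrt (K' t) with hrdef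
    have hr : 0 < r := Real.sqrt_pos.mpr hKpos
    have hm : r * stdNormalCDF (-r) < stdNormalPDF (-r) := by simpa using (mills (d := -r))
    have hlt : r < stdNormalPDF (-r) / stdNormalCDF (-r) :=
      (lt_div_iff₀ (cdf_pos (-r))).mpr (by linarith [hm])
    calc (1:ℝ) = r⁻¹ * r := (inv_mul_cancel₀ hr.ne').symm
      _ < r⁻¹ * (stdNormalPDF (-r) / stdNormalCDF (-r)) :=
          mul_lt_mul_of_pos_left hlt (inv_pos.mpr hr)
  -- part 2
  have hK'T : K' T = 0 := by simp [hK'def]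
  have hsqrtK'0 : Filter.Tendsto (fun t => Real.sqrt (K' t)) (nhdsWithin T (Set.Iio T)) (nhds 0) := by
    have := ((Real.continuous_sqrt.comp hK'cont).tendsto T).mono_left
      (nhdsWithin_le_nhds (s := Set.Iio T))
    simpa [hK'T, Function.comp_def] using this
  have part2 : Filter.Tendsto Δ (nhdsWithin T (Set.Iio T)) Filter.atTop := by
    have hev : ∀ᶠ t in nhdsWithin T (Set.Iio T), Δ t = Δ' t := by
      have hmem : Set.Ioo 0 T ∈ nhdsWithin T (Set.Iio T) := by
        rw [mem_nhdsWithin]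
        exact ⟨Set.Ioi 0, isOpen_Ioi, hT, by intro x hx; exact ⟨hx.1, hx.2⟩⟩
      filter_upwards [hmem] with t ht
      exact hΔeq t ⟨ht.1.le, ht.2.le⟩
    refine Filter.Tendsto.congr' (Filter.EventuallyEq.symm hev) ?_
    have hinv : Filter.Tendsto (fun t => (Real.sqrt (K' t))⁻¹) (nhdsWithin T (Set.Iio T)) Filter.atTop := by
      refine tendsto_inv_nhdsGT_zero.comp ?_
      refine tendsto_nhdsWithin_of_tendsto_nhds_of_eventually_within _
        hsqrtK'0 ?_
      filter_upwards [self_mem_nhdsWithin] with t ht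
      exact Set.mem_Ioi.mpr (Real.sqrt_pos.mpr
        (lt_of_lt_of_le (mul_pos (pow_pos hc 2) (sub_pos.mpr ht)) (hK'lb t (le_of_lt ht))))
    have hneg : Filter.Tendsto (fun t => -Real.sqrt (K' t)) (nhdsWithin T (Set.Iio T)) (nhds 0) := by
      simpa using hsqrtK'0.neg
    have hratio : Filter.Tendsto
        (fun t => stdNormalPDF (-Real.sqrt (K' t)) / stdNormalCDF (-Real.sqrt (K' t)))
        (nhdsWithin T (Set.Iio T)) (nhds (stdNormalPDF 0 / stdNormalCDF 0)) :=
      ((pdf_continuous.tendsto 0).comp hneg).div ((cdf_continuous.tendsto 0).comp hneg)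
        (cdf_pos 0).ne'
    exact Filter.Tendsto.atTop_mul_pos (div_pos (pdf_pos 0) (cdf_pos 0)) hinv hratio
  -- part 3
  have hΔ'nonneg : ∀ t, 0 ≤ Δ' t := fun t =>
    mul_nonneg (inv_nonneg.mpr (Real.sqrt_nonneg _))
      (div_nonneg (pdf_pos _).le (cdf_pos _).le)
  have hΔ'meas : Measurable Δ' := by
    have h1 : Continuous fun t => Real.sqrt (K' t) := Real.continuous_sqrt.comp hK'cont
    exact (h1.measurable.inv).mul
      (((pdf_continuous.comp h1.neg).measurable).div ((cdf_continuous.comp h1.neg).measurable))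
  set P := stdNormalCDF (-(C * Real.sqrt T)) with hP
  have hPpos : 0 < P := cdf_pos _
  set M := c⁻¹ * ((Real.sqrt (2 * Real.pi))⁻¹ / P) with hM
  have hrpow_sqrt : ∀ x : ℝ, 0 ≤ x → x ^ (-(1/2) : ℝ) = (Real.sqrt x)⁻¹ := by
    intro x hx
    rw [Real.sqrt_eq_rpow, ← Real.rpow_neg hx]
  have part3 : IntervalIntegrable Δ volume 0 T := by
    rw [intervalIntegrable_iff_integrableOn_Ioc_of_le hT.le]
    have h1 : IntervalIntegrable (fun x : ℝ => x ^ (-(1/2) : ℝ)) volume 0 T :=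
      intervalIntegrable_rpow' (by norm_num)
    have h2 : IntervalIntegrable (fun x : ℝ => (T - x) ^ (-(1/2) : ℝ)) volume 0 T := by
      simpa using (h1.comp_sub_left T).symm
    have hmajint : IntegrableOn (fun s => M * (T - s) ^ (-(1/2) : ℝ)) (Set.Ioc 0 T) :=
      (intervalIntegrable_iff_integrableOn_Ioc_of_le hT.le).mp (h2.const_mul M)
    have hbnd : ∀ s ∈ Set.Ioc (0:ℝ) T, ‖Δ' s‖ ≤ M * (T - s) ^ (-(1/2) : ℝ) := by
      intro s hs
      rw [Real.norm_eq_abs, abs_of_nonneg (hΔ'nonneg s)]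
      rcases eq_or_lt_of_le hs.2 with rfl | hsT
      · have : K' s = 0 := by simp [hK'def]
        simp only [hΔ'def, this, Real.sqrt_zero, inv_zero, zero_mul]
        have : (s - s : ℝ) ^ (-(1/2) : ℝ) = 0 := by
          rw [sub_self, Real.zero_rpow (by norm_num)]
        rw [this, mul_zero]
      · have hTs : 0 < T - s := sub_pos.mpr hsT
        set r := Real.sqrt (K' s) with hrdef
        have hrlb : c * Real.sqrt (T - s) ≤ r := by
          have := Real.sqrt_le_sqrt (hK'lb s hs.2)
          rwa [Real.sqrt_mul (by positivity) (T - s), Real.sqrt_sq hc.le] at this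
        have hrub : r ≤ C * Real.sqrt T := by
          have h3 : K' s ≤ C ^ 2 * T := le_trans (hK'ub s hs.2) (by nlinarith [hs.1])
          have := Real.sqrt_le_sqrt h3
          rwa [Real.sqrt_mul (by positivity) T, Real.sqrt_sq hC.le] at this
        have hcs : 0 < c * Real.sqrt (T - s) := by positivity
        have hinv : r⁻¹ ≤ (c * Real.sqrt (T - s))⁻¹ := by
          exact inv_anti₀ hcs hrlb
        have hratio : stdNormalPDF (-r) / stdNormalCDF (-r)
            ≤ (Real.sqrt (2 * Real.pi))⁻¹ / P := by
          refine div_le_div₀ (by positivity) (pdf_le _) hPpos (cdf_mono (neg_le_neg hrub))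
        calc Δ' s ≤ (c * Real.sqrt (T - s))⁻¹ * ((Real.sqrt (2 * Real.pi))⁻¹ / P) := by
              refine mul_le_mul hinv hratio (div_nonneg (pdf_pos _).le (cdf_pos _).le) ?_
              positivity
          _ = M * (T - s) ^ (-(1/2) : ℝ) := by
              rw [hrpow_sqrt _ hTs.le, hM, mul_inv]
              ring
    refine IntegrableOn.congr_fun (Integrable.mono' hmajint
      hΔ'meas.aestronglyMeasurable.restrict ?_) (fun s hs => (hΔeq s ⟨hs.1.le, hs.2⟩).symm)
      measurableSet_Ioc
    exact (ae_restrict_mem measurableSet_Ioc).mono hbnd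
  -- part 4
  have part4 : ¬ IntervalIntegrable (fun s => (Δ s) ^ 2) volume 0 T := by
    intro h
    rw [intervalIntegrable_iff_integrableOn_Ioc_of_le hT.le] at h
    set m0 := (Real.sqrt (2 * Real.pi))⁻¹ * Real.exp (-(C ^ 2 * T) / 2) with hm0
    have hm0pos : 0 < m0 := by positivity
    set k := m0 ^ 2 / C ^ 2 with hk
    have hkpos : 0 < k := by positivity
    have hbound : ∀ s ∈ Set.Ioc (0:ℝ) T, k * (T - s)⁻¹ ≤ (Δ s) ^ 2 := by
      intro s hs
      rcases eq_or_lt_of_le hs.2 with rfl | hsT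
      · simp [sq_nonneg]
      · have hTs : 0 < T - s := sub_pos.mpr hsT
        rw [hΔeq s ⟨hs.1.le, hs.2⟩]
        have hKpos : 0 < K' s :=
          lt_of_lt_of_le (mul_pos (pow_pos hc 2) hTs) (hK'lb s hs.2)
        set r := Real.sqrt (K' s) with hrdef
        have hr : 0 < r := Real.sqrt_pos.mpr hKpos
        have hrub : r ≤ C * Real.sqrt (T - s) := by
          have := Real.sqrt_le_sqrt (hK'ub s hs.2)
          rwa [Real.sqrt_mul (by positivity) (T - s), Real.sqrt_sq hC.le] at this
        have hpdf : m0 ≤ stdNormalPDF (-r) := by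
          refine pdf_ge ?_
          have h1 : (-r) ^ 2 = K' s := by
            rw [neg_pow]; simp [hrdef, Real.sq_sqrt hKpos.le]
          rw [h1]
          exact le_trans (hK'ub s hs.2) (by nlinarith [hs.1])
        have hratio : stdNormalPDF (-r) ≤ stdNormalPDF (-r) / stdNormalCDF (-r) := by
          rw [le_div_iff₀ (cdf_pos _)]
          exact mul_le_of_le_one_right (pdf_pos _).le (cdf_le_one _)
        have hinv : (C * Real.sqrt (T - s))⁻¹ ≤ r⁻¹ :=
          inv_anti₀ hr hrub
        have hΔge : (C * Real.sqrt (T - s))⁻¹ * m0 ≤ Δ' s := by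
          refine mul_le_mul hinv (le_trans hpdf hratio) hm0pos.le (inv_nonneg.mpr (Real.sqrt_nonneg _))
        have hsq : ((C * Real.sqrt (T - s))⁻¹ * m0) ^ 2 = k * (T - s)⁻¹ := by
          rw [mul_pow, inv_pow, mul_pow, Real.sq_sqrt hTs.le, hk]
          field_simp
        calc k * (T - s)⁻¹ = ((C * Real.sqrt (T - s))⁻¹ * m0) ^ 2 := hsq.symm
          _ ≤ (Δ' s) ^ 2 := by
              refine pow_le_pow_left₀ (by positivity) hΔge 2
    have hkint : IntegrableOn (fun s => k * (T - s)⁻¹) (Set.Ioc 0 T) := by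
      refine Integrable.mono' h
        (((measurable_const.sub measurable_id).inv.const_mul k).aestronglyMeasurable.restrict) ?_
      refine (ae_restrict_mem measurableSet_Ioc).mono fun s hs => ?_
      rw [Real.norm_eq_abs, abs_of_nonneg
        (mul_nonneg hkpos.le (inv_nonneg.mpr (sub_nonneg.mpr hs.2)))]
      exact hbound s hs
    have h5 : IntervalIntegrable (fun s => k * (T - s)⁻¹) volume 0 T :=
      (intervalIntegrable_iff_integrableOn_Ioc_of_le hT.le).mpr hkint
    have h7 : IntervalIntegrable (fun x : ℝ => k * x⁻¹) volume 0 T := by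
      have h6 := (h5.comp_sub_left T).symm
      simp only [sub_sub_cancel, sub_zero, sub_self] at h6
      exact h6
    have h8 : IntervalIntegrable (fun x : ℝ => x⁻¹) volume 0 T := by
      have h9 := h7.smul k⁻¹
      have he : (k⁻¹ • fun x : ℝ => k * x⁻¹) = fun x : ℝ => x⁻¹ := by
        funext x
        simp only [Pi.smul_apply, smul_eq_mul]
        field_simp
      rwa [he] at h9
    exact not_intervalIntegrable_of_sub_inv_isBigO_punctured
      (Asymptotics.IsBigO.of_bound 1 (Filter.Eventually.of_forall fun x => by simp)) hT.ne
      Set.left_mem_uIcc h8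
  exact ⟨part1, part2, part3, part4⟩
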